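/- Let (A, ⊠, I) be a monoidal abelian category whose monoidal product preserves reflexive coequalizers. Let V, W be objects and ι_A : A ↪ W, ι_B : B ↪ W subobjects of W. Then Im(V ⊠ ((A+B)̲ ⊕ W)) = Im(V ⊠ (A̲ ⊕ W)) + Im(V ⊠ (B̲ ⊕ W)) as subobjects of V ⊠ W, where Im(V ⊠ (A̲ ⊕ W)) denotes the image of the composite V ⊠ (A̲ ⊕ W) ↪ V ⊠ (A ⊕ W) → V ⊠ W, the second map being V ⊠ (ι_A + id_W). -/
import Mathlib


open CategoryTheory Limits MonoidalCategory

/-- A functor preserves reflexive coequalizers if it preserves coequalizers of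
every reflexive pair. -/
def PreservesReflexiveCoequalizersFun {𝒜 : Type*} [Category 𝒜] {ℬ : Type*} [Category ℬ]
    (Γ : 𝒜 ⥤ ℬ) : Prop :=
  ∀ ⦃X Y : 𝒜⦄ (d₀ d₁ : X ⟶ Y), IsReflexivePair d₀ d₁ →
    PreservesColimit (parallelPair d₀ d₁) Γ

/-- For a subobject `ι : A ↪ W`, this is the subobject
`Im (V ⊠ (A̲ ⊕ W)) ⊆ V ⊠ W`: the image of the composite of the inclusion of
the multilinear part `V ⊠ (A̲ ⊕ W) = ker (V ⊠ π_W)` into `V ⊠ (A ⊕ W)`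
with `V ⊠ (ι + id_W) : V ⊠ (A ⊕ W) ⟶ V ⊠ W`. -/
noncomputable def mImage {𝒜 : Type*} [Category 𝒜] [Abelian 𝒜] [MonoidalCategory 𝒜]
    (V : 𝒜) {A W : 𝒜} (ι : A ⟶ W) : Subobject (V ⊗ W) :=
  imageSubobject
    (kernel.ι (V ◁ (biprod.snd : A ⊞ W ⟶ W)) ≫ (V ◁ biprod.desc ι (𝟙 W)))

section Aux

variable {𝒜 : Type*} [Category 𝒜] [Abelian 𝒜]

/-- In an abelian category, precomposition with an epimorphism does not change the image. -/
theorem aux_imageSubobject_comp_eq_of_epi {X' X Y : 𝒜} (h : X' ⟶ X) [Epi h] (f : X ⟶ Y) :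
    imageSubobject (h ≫ f) = imageSubobject f := by
  refine le_antisymm (imageSubobject_comp_le h f) ?_
  haveI : StrongEpi h := strongEpi_of_epi h
  have sq : CommSq (factorThruImageSubobject (h ≫ f)) h
      ((imageSubobject (h ≫ f)).arrow) f := ⟨by simp [imageSubobject_arrow_comp]⟩
  exact imageSubobject_le f sq.lift sq.fac_right

/-- The image of a sum of two morphisms is contained in the sup of subobjects containing
the respective images. -/
theorem aux_imageSubobject_add_le {X Y : 𝒜} (u v : X ⟶ Y) (M N : Subobject Y)
    (hu : imageSubobject u ≤ M) (hv : imageSubobject v ≤ N) :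
    imageSubobject (u + v) ≤ M ⊔ N := by
  refine imageSubobject_le _
    (factorThruImageSubobject u ≫ Subobject.ofLE _ _ (hu.trans le_sup_left)
      + factorThruImageSubobject v ≫ Subobject.ofLE _ _ (hv.trans le_sup_right)) ?_
  rw [Preadditive.add_comp, Category.assoc, Category.assoc, Subobject.ofLE_arrow,
    Subobject.ofLE_arrow, imageSubobject_arrow_comp, imageSubobject_arrow_comp]

/-- The sup of two subobjects is the image of the canonical map from the biproduct. -/
theorem aux_sup_mk_eq_imageSubobject {A B W : 𝒜} (ιA : A ⟶ W) (ιB : B ⟶ W)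
    [Mono ιA] [Mono ιB] :
    Subobject.mk ιA ⊔ Subobject.mk ιB = imageSubobject (biprod.desc ιA ιB) := by
  refine le_antisymm (sup_le ?_ ?_) ?_
  · exact Subobject.mk_le_of_comm (biprod.inl ≫ factorThruImageSubobject _)
      (by rw [Category.assoc, imageSubobject_arrow_comp, biprod.inl_desc])
  · exact Subobject.mk_le_of_comm (biprod.inr ≫ factorThruImageSubobject _)
      (by rw [Category.assoc, imageSubobject_arrow_comp, biprod.inr_desc])
  · exact imageSubobject_le _
      (biprod.desc (Subobject.ofMkLE ιA _ le_sup_left) (Subobject.ofMkLE ιB _ le_sup_right))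
      (by apply biprod.hom_ext' <;> simp)

variable [MonoidalCategory 𝒜]

/-- If `tensorLeft V` preserves reflexive coequalizers, then whiskering with `V` preserves
epimorphisms. -/
theorem aux_epi_whiskerLeft (V : 𝒜) (hV : PreservesReflexiveCoequalizersFun (tensorLeft V))
    {X Y : 𝒜} (e : X ⟶ Y) [Epi e] : Epi (V ◁ e) := by
  let d₀ : (kernel e ⊞ X) ⟶ X := biprod.desc (kernel.ι e) (𝟙 X)
  let d₁ : (kernel e ⊞ X) ⟶ X := biprod.snd
  have hrefl : IsReflexivePair d₀ d₁ :=
    IsReflexivePair.mk' biprod.inr (by simp [d₀]) (by simp [d₁])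
  have hw : d₀ ≫ e = d₁ ≫ e := by
    apply biprod.hom_ext' <;> simp [d₀, d₁, kernel.condition]
  have hc : IsColimit (Cofork.ofπ e hw) := by
    refine Cofork.IsColimit.mk _
      (fun s => Abelian.epiDesc e s.π ?_) (fun s => ?_) (fun s m hm => ?_)
    · have h2 := congrArg (fun t => biprod.inl ≫ t) s.condition
      simpa [d₀, d₁] using h2
    · simp
    · rw [← cancel_epi e]
      simpa using hm
  haveI := hV d₀ d₁ hrefl
  have hc2 := isColimitCoforkMapOfIsColimit (tensorLeft V) hw hc
  constructor
  intro Z u v huv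
  exact Cofork.IsColimit.hom_ext hc2 (by simpa using huv)

/-- `mImage V ι` is the image of `V ◁ (ι + id) - V ◁ π_W`. -/
theorem aux_mImage_eq (V : 𝒜) {A W : 𝒜} (ι : A ⟶ W) :
    mImage V ι
      = imageSubobject (V ◁ biprod.desc ι (𝟙 W) - V ◁ (biprod.snd : A ⊞ W ⟶ W)) := by
  set g := V ◁ biprod.desc ι (𝟙 W) with hg
  set σ := V ◁ (biprod.snd : A ⊞ W ⟶ W) with hσdef
  set κ := kernel.ι σ with hκ
  have hinr : (V ◁ (biprod.inr : W ⟶ A ⊞ W)) ≫ g = 𝟙 (V ⊗ W) := by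
    rw [hg, ← MonoidalCategory.whiskerLeft_comp, biprod.inr_desc,
      MonoidalCategory.whiskerLeft_id]
  have hinr' : (V ◁ (biprod.inr : W ⟶ A ⊞ W)) ≫ σ = 𝟙 (V ⊗ W) := by
    rw [hσdef, ← MonoidalCategory.whiskerLeft_comp, biprod.inr_snd,
      MonoidalCategory.whiskerLeft_id]
  have hp0 : (𝟙 (V ⊗ (A ⊞ W)) - σ ≫ (V ◁ (biprod.inr : W ⟶ A ⊞ W))) ≫ σ = 0 := by
    rw [Preadditive.sub_comp, Category.id_comp, Category.assoc, hinr', Category.comp_id,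
      sub_self]
  set p := kernel.lift σ _ hp0 with hpdef
  have hpκ : p ≫ κ = 𝟙 (V ⊗ (A ⊞ W)) - σ ≫ (V ◁ (biprod.inr : W ⟶ A ⊞ W)) :=
    kernel.lift_ι _ _ _
  have h1 : κ ≫ (g - σ) = κ ≫ g := by
    rw [Preadditive.comp_sub, kernel.condition, sub_zero]
  have h2 : g - σ = p ≫ (κ ≫ g) := by
    rw [← Category.assoc, hpκ, Preadditive.sub_comp, Category.id_comp, Category.assoc,
      hinr, Category.comp_id]
  show imageSubobject (κ ≫ g) = imageSubobject (g - σ)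
  refine le_antisymm ?_ ?_
  · rw [← h1]
    exact imageSubobject_comp_le _ _
  · rw [h2]
    exact imageSubobject_comp_le _ _

end Aux

/-- if the monoidal product of a monoidal abelian category preserves
reflexive coequalizers, then for subobjects `A, B ↪ W`,
`Im(V ⊠ ((A+B)̲ ⊕ W)) = Im(V ⊠ (A̲ ⊕ W)) + Im(V ⊠ (B̲ ⊕ W))`
as subobjects of `V ⊠ W`. -/
theorem statement6 {𝒜 : Type*} [Category 𝒜] [Abelian 𝒜] [MonoidalCategory 𝒜]
    (hL : ∀ X : 𝒜, PreservesReflexiveCoequalizersFun (tensorLeft X))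
    (hR : ∀ X : 𝒜, PreservesReflexiveCoequalizersFun (tensorRight X))
    (V : 𝒜) {A B W : 𝒜} (ιA : A ⟶ W) (ιB : B ⟶ W) [Mono ιA] [Mono ιB] :
    mImage V ((Subobject.mk ιA ⊔ Subobject.mk ιB).arrow) =
      mImage V ιA ⊔ mImage V ιB := by
  have hsup := aux_sup_mk_eq_imageSubobject ιA ιB
  rw [hsup, aux_mImage_eq, aux_mImage_eq, aux_mImage_eq]
  set m : A ⊞ B ⟶ W := biprod.desc ιA ιB with hmdef
  set s : ((imageSubobject m : 𝒜)) ⟶ W := (imageSubobject m).arrow with hsdef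
  set F := V ◁ biprod.desc s (𝟙 W)
      - V ◁ (biprod.snd : (imageSubobject m : 𝒜) ⊞ W ⟶ W) with hF
  set FA := V ◁ biprod.desc ιA (𝟙 W) - V ◁ (biprod.snd : A ⊞ W ⟶ W) with hFA
  set FB := V ◁ biprod.desc ιB (𝟙 W) - V ◁ (biprod.snd : B ⊞ W ⟶ W) with hFB
  refine le_antisymm ?_ (sup_le ?_ ?_)
  · -- the hard direction
    set q : A ⊞ B ⟶ (imageSubobject m : 𝒜) := factorThruImageSubobject m with hqdef
    have hqs : q ≫ s = m := imageSubobject_arrow_comp m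
    haveI : Epi (biprod.map q (𝟙 W)) := inferInstance
    haveI : Epi (V ◁ biprod.map q (𝟙 W)) := aux_epi_whiskerLeft V (hL V) _
    have key : (V ◁ biprod.map q (𝟙 W)) ≫ F
        = V ◁ biprod.desc m (𝟙 W) - V ◁ (biprod.snd : (A ⊞ B) ⊞ W ⟶ W) := by
      rw [hF, Preadditive.comp_sub, ← MonoidalCategory.whiskerLeft_comp,
        ← MonoidalCategory.whiskerLeft_comp]
      congr 2
      · apply biprod.hom_ext' <;> simp [hqs]
      · apply biprod.hom_ext' <;> simp
    have him : imageSubobject F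
        = imageSubobject (V ◁ biprod.desc m (𝟙 W)
            - V ◁ (biprod.snd : (A ⊞ B) ⊞ W ⟶ W)) := by
      rw [← aux_imageSubobject_comp_eq_of_epi (V ◁ biprod.map q (𝟙 W)) F, key]
    set h₁ : (A ⊞ B) ⊞ W ⟶ A ⊞ W :=
      biprod.lift (biprod.fst ≫ biprod.fst) (biprod.desc (biprod.snd ≫ ιB) (𝟙 W)) with hh₁
    set h₂ : (A ⊞ B) ⊞ W ⟶ B ⊞ W := biprod.map biprod.snd (𝟙 W) with hh₂
    have c1 : h₁ ≫ biprod.desc ιA (𝟙 W) = biprod.desc m (𝟙 W) := by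
      apply biprod.hom_ext'
      · apply biprod.hom_ext' <;> simp [hh₁, hmdef, biprod.lift_desc]
      · simp [hh₁, biprod.lift_desc]
    have c2 : h₁ ≫ biprod.snd = biprod.desc (biprod.snd ≫ ιB) (𝟙 W) := biprod.lift_snd _ _
    have c3 : h₂ ≫ biprod.desc ιB (𝟙 W) = biprod.desc (biprod.snd ≫ ιB) (𝟙 W) := by
      apply biprod.hom_ext' <;> simp [hh₂]
    have c4 : h₂ ≫ (biprod.snd : B ⊞ W ⟶ W) = biprod.snd := by
      simp [hh₂]
    have hdecomp : V ◁ biprod.desc m (𝟙 W) - V ◁ (biprod.snd : (A ⊞ B) ⊞ W ⟶ W)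
        = (V ◁ h₁) ≫ FA + (V ◁ h₂) ≫ FB := by
      rw [hFA, hFB, Preadditive.comp_sub, Preadditive.comp_sub,
        ← MonoidalCategory.whiskerLeft_comp, ← MonoidalCategory.whiskerLeft_comp,
        ← MonoidalCategory.whiskerLeft_comp, ← MonoidalCategory.whiskerLeft_comp,
        c1, c2, c3, c4]
      abel
    rw [him, hdecomp]
    exact aux_imageSubobject_add_le _ _ _ _
      (imageSubobject_comp_le _ _) (imageSubobject_comp_le _ _)
  · -- Im(V ⊠ (A̲ ⊕ W)) ≤ Im(V ⊠ ((A+B)̲ ⊕ W))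
    have ha : Subobject.mk ιA ≤ imageSubobject m := hsup ▸ le_sup_left
    have ha' : Subobject.ofMkLE ιA _ ha ≫ s = ιA := Subobject.ofMkLE_arrow ha
    have hfa : FA = (V ◁ biprod.map (Subobject.ofMkLE ιA _ ha) (𝟙 W)) ≫ F := by
      rw [hFA, hF, Preadditive.comp_sub, ← MonoidalCategory.whiskerLeft_comp,
        ← MonoidalCategory.whiskerLeft_comp]
      congr 2
      · apply biprod.hom_ext' <;> simp [ha']
      · apply biprod.hom_ext' <;> simp
    rw [hfa]
    exact imageSubobject_comp_le _ _
  · have hb : Subobject.mk ιB ≤ imageSubobject m := hsup ▸ le_sup_right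
    have hb' : Subobject.ofMkLE ιB _ hb ≫ s = ιB := Subobject.ofMkLE_arrow hb
    have hfb : FB = (V ◁ biprod.map (Subobject.ofMkLE ιB _ hb) (𝟙 W)) ≫ F := by
      rw [hFB, hF, Preadditive.comp_sub, ← MonoidalCategory.whiskerLeft_comp,
        ← MonoidalCategory.whiskerLeft_comp]
      congr 2
      · apply biprod.hom_ext' <;> simp [hb']
      · apply biprod.hom_ext' <;> simp
    rw [hfb]
    exact imageSubobject_comp_le _ _
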